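/- arXiv:1405.7488 — 3 statements merged into one kernel-verified Lean document; each statement's English description precedes it below -/
import Mathlib

section
/- For the Markov control process of the solitaire Ten Thousand game with value-iteration operator U and W_k = U^k applied to the zero function: for every k ≥ 1, W_k(τ,i,n) = τ whenever τ ≥ 56, and W_k(τ,i,n) < 56 whenever τ < 56. -/
/-- A dice configuration `[f, o, t]`: `f` fives, `o` ones, and a
three-of-a-kind of value `t ∈ {2,3,4,6}` (`t = 0` meaning none). -/
abbrev Config := ℕ × ℕ × ℕ

/-- Score (in chips) of a configuration. -/
def score : Config → ℕ
  | (f, o, t) => f + 2 * o + (if 3 ≤ o then 14 else 0) + (if 3 ≤ f then 7 else 0) + 2 * t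

/-- Number of scoring dice of a configuration. -/
def dice : Config → ℕ
  | (f, o, t) => f + o + (if t ≠ 0 then 3 else 0)

/-- Number of scoring combinations of a configuration. -/
def combs : Config → ℕ
  | (f, o, t) => f + o + (if t ≠ 0 then 1 else 0)

/-- The table of scoring configurations together with the frequencies
`(f(1,i), f(2,i), f(3,i), f(4,i), f(5,i))` of each configuration among
the `6^n` outcomes of a roll of `n` dice. -/
def freqTable : List (Config × (ℕ × ℕ × ℕ × ℕ × ℕ)) :=
  [((1,0,0), (1, 8, 48, 240, 1020)),
   ((0,1,0), (1, 8, 48, 240, 1020)),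
   ((2,0,0), (0, 1, 12, 96, 600)),
   ((1,1,0), (0, 2, 24, 192, 1200)),
   ((0,2,0), (0, 1, 12, 96, 600)),
   ((3,0,0), (0, 0, 1, 16, 160)),
   ((2,1,0), (0, 0, 3, 48, 480)),
   ((1,2,0), (0, 0, 3, 48, 480)),
   ((0,3,0), (0, 0, 1, 16, 160)),
   ((0,0,2), (0, 0, 1, 13, 106)),
   ((0,0,3), (0, 0, 1, 13, 106)),
   ((0,0,4), (0, 0, 1, 13, 106)),
   ((0,0,6), (0, 0, 1, 13, 106)),
   ((4,0,0), (0, 0, 0, 1, 20)),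
   ((3,1,0), (0, 0, 0, 4, 80)),
   ((2,2,0), (0, 0, 0, 6, 120)),
   ((1,3,0), (0, 0, 0, 4, 80)),
   ((0,4,0), (0, 0, 0, 1, 20)),
   ((1,0,2), (0, 0, 0, 4, 65)),
   ((1,0,3), (0, 0, 0, 4, 65)),
   ((1,0,4), (0, 0, 0, 4, 65)),
   ((1,0,6), (0, 0, 0, 4, 65)),
   ((0,1,2), (0, 0, 0, 4, 65)),
   ((0,1,3), (0, 0, 0, 4, 65)),
   ((0,1,4), (0, 0, 0, 4, 65)),
   ((0,1,6), (0, 0, 0, 4, 65)),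
   ((5,0,0), (0, 0, 0, 0, 1)),
   ((4,1,0), (0, 0, 0, 0, 5)),
   ((3,2,0), (0, 0, 0, 0, 10)),
   ((2,3,0), (0, 0, 0, 0, 10)),
   ((1,4,0), (0, 0, 0, 0, 5)),
   ((0,5,0), (0, 0, 0, 0, 1)),
   ((2,0,2), (0, 0, 0, 0, 10)),
   ((2,0,3), (0, 0, 0, 0, 10)),
   ((2,0,4), (0, 0, 0, 0, 10)),
   ((2,0,6), (0, 0, 0, 0, 10)),
   ((1,1,2), (0, 0, 0, 0, 20)),
   ((1,1,3), (0, 0, 0, 0, 20)),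
   ((1,1,4), (0, 0, 0, 0, 20)),
   ((1,1,6), (0, 0, 0, 0, 20)),
   ((0,2,2), (0, 0, 0, 0, 10)),
   ((0,2,3), (0, 0, 0, 0, 10)),
   ((0,2,4), (0, 0, 0, 0, 10)),
   ((0,2,6), (0, 0, 0, 0, 10))]

/-- The set of scoring configurations. -/
def scoringConfigs : Finset Config := (freqTable.map Prod.fst).toFinset

/-- `freq n i` = number of outcomes of a roll of `n` dice giving the scoring
configuration `i` (0 if `i` is not a scoring configuration). -/
def freq (n : ℕ) (i : Config) : ℕ :=
  match freqTable.find? (fun e => decide (e.1 = i)) with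
  | some e =>
    match n with
    | 1 => e.2.1
    | 2 => e.2.2.1
    | 3 => e.2.2.2.1
    | 4 => e.2.2.2.2.1
    | 5 => e.2.2.2.2.2
    | _ => 0
  | none => 0

/-- `fEmpty n` = number of non-scoring outcomes of a roll of `n` dice. -/
def fEmpty : ℕ → ℕ
  | 1 => 4
  | 2 => 16
  | 3 => 60
  | 4 => 204
  | 5 => 600
  | _ => 0

/-- `j ≺ i`: configuration `j` is obtained from `i` by removing a nonempty
proper subset of its scoring combinations. -/
def Smaller (j i : Config) : Prop :=
  j.1 ≤ i.1 ∧ j.2.1 ≤ i.2.1 ∧ (j.2.2 = 0 ∨ j.2.2 = i.2.2) ∧ j ≠ i ∧ 0 < combs j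

instance : DecidablePred fun p : Config × Config => Smaller p.1 p.2 := by
  intro p; unfold Smaller; infer_instance

instance (i : Config) : DecidablePred (Smaller · i) := by
  intro j; unfold Smaller; infer_instance

/-- A (non-terminal) state `(τ, i, n)` of the solitaire Ten Thousand game:
accumulated chips `τ`, last configuration `i`, `n` dice available.  The
absorbing state `Δ` is not represented: its value is always `0`. -/
abbrev GState := ℕ × Config × ℕ

/-- Value of the action roll from accumulated score `τ` with `n` dice, given
a value function `V`: transition to `(τ + s(k), k, n − d(k) + 5·1{n = d(k)})`
with probability `f(n,k)/6^n`, and to the absorbing state `Δ` (value 0)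
with probability `f(n,∅)/6^n`. -/
noncomputable def rollVal (V : GState → ℝ) (τ n : ℕ) : ℝ :=
  ∑ k ∈ scoringConfigs,
    ((freq n k : ℝ) / 6 ^ n) * V (τ + score k, k, if n = dice k then 5 else n - dice k)

/-- Value of the best available move action (`0` if no move is available):
a move to `j ≺ i` transitions deterministically to
`(τ − s(i) + s(j), j, n + d(i) − d(j))`; moves are available only when
`n < 5` and `c(i) > 1`. -/
noncomputable def moveVal (V : GState → ℝ) : GState → ℝ
  | (τ, i, n) =>
    if n < 5 ∧ 1 < combs i then
      sSup ((fun j => V (τ - score i + score j, j, n + dice i - dice j)) ''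
        {j | Smaller j i})
    else 0

/-- The Bellman (value iteration) operator `U` of the solitaire Ten Thousand
game: maximum over the actions stop (reward `τ`), roll, and moves. -/
noncomputable def U (V : GState → ℝ) : GState → ℝ
  | (τ, i, n) => max (τ : ℝ) (max (rollVal V τ n) (moveVal V (τ, i, n)))

/-- `W k = U^k 0`, the `k`-th value iterate starting from the zero function. -/
noncomputable def W (k : ℕ) : GState → ℝ := U^[k] (fun _ => 0)

/-- `V* = lim_k W k = sup_k W k`, the value function of the game. -/
noncomputable def Vstar (x : GState) : ℝ := ⨆ k, W k x

/-! ### Auxiliary lemmas for stmt5 -/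

lemma freq_zero {n : ℕ} (h : n = 0 ∨ 6 ≤ n) (i : Config) : freq n i = 0 := by
  unfold freq
  cases freqTable.find? (fun e => decide (e.1 = i)) with
  | none => rfl
  | some e =>
    obtain rfl | h := h
    · rfl
    · obtain ⟨m, rfl⟩ : ∃ m, n = m + 6 := ⟨n - 6, by omega⟩
      rfl

lemma rollVal_zero (V : GState → ℝ) (τ : ℕ) {n : ℕ} (h : n = 0 ∨ 6 ≤ n) :
    rollVal V τ n = 0 := by
  unfold rollVal
  refine Finset.sum_eq_zero fun k _ => ?_
  rw [freq_zero h k]; simp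

lemma D0 : ∀ i ∈ scoringConfigs, 1 ≤ score i ∧ score i ≤ 24 := by decide

lemma D1 : ∀ i ∈ scoringConfigs, ∀ a ∈ Finset.range (i.1 + 1), ∀ b ∈ Finset.range (i.2.1 + 1),
    ∀ c ∈ ({0, i.2.2} : Finset ℕ), 0 < combs (a, b, c) →
      ((a, b, c) ∈ scoringConfigs ∧ 1 ≤ score (a, b, c) ∧ score (a, b, c) ≤ score i) := by decide

lemma D2 : ∀ n ∈ Finset.Icc 1 5,
    (∑ k ∈ scoringConfigs, freq n k * score k) + 56 * (∑ k ∈ scoringConfigs, freq n k) ≤ 56 * 6 ^ n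
    ∧ (∑ k ∈ scoringConfigs, freq n k) ≤ 6 ^ n := by decide

lemma D3 : ∀ n ∈ Finset.Icc 1 5, ∀ t ∈ Finset.Icc 1 55,
    10 * (∑ k ∈ scoringConfigs, freq n k * (if 56 ≤ t + score k then t + score k else 0))
    + 551 * (∑ k ∈ scoringConfigs, freq n k * (if 56 ≤ t + score k then 0 else 1))
    ≤ 551 * 6 ^ n := by decide

lemma smaller_facts {i j : Config} (hi : i ∈ scoringConfigs) (h : Smaller j i) :
    j ∈ scoringConfigs ∧ 1 ≤ score j ∧ score j ≤ score i := by
  obtain ⟨h1, h2, h3, _, h5⟩ := h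
  obtain ⟨a, b, c⟩ := j
  refine D1 i hi a (Finset.mem_range.2 (Nat.lt_succ_of_le h1))
    b (Finset.mem_range.2 (Nat.lt_succ_of_le h2)) c ?_ h5
  rcases h3 with h | h <;> simp_all

/-- The invariant preserved by the Bellman operator. -/
def Good (V : GState → ℝ) : Prop :=
  ∀ (τ : ℕ) (i : Config) (n : ℕ), 1 ≤ τ → i ∈ scoringConfigs →
    (56 ≤ τ → V (τ, i, n) = (τ : ℝ)) ∧ (τ < 56 → V (τ, i, n) ≤ 551 / 10)

lemma moveVal_le {V : GState → ℝ} (hV : Good V) (τ : ℕ) (i : Config) (n : ℕ)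
    (hi : i ∈ scoringConfigs) :
    moveVal V (τ, i, n) ≤ max (τ : ℝ) (551 / 10) := by
  have h0 : (0 : ℝ) ≤ max (τ : ℝ) (551 / 10) := le_max_of_le_right (by norm_num)
  simp only [moveVal]
  split
  · apply Real.sSup_le _ h0
    rintro x ⟨j, hj, rfl⟩
    simp only [Set.mem_setOf_eq] at hj
    show V (τ - score i + score j, j, n + dice i - dice j) ≤ max (τ : ℝ) (551 / 10)
    obtain ⟨hjS, hj1, hjle⟩ := smaller_facts hi hj
    have hii := D0 i hi
    have hτ'1 : 1 ≤ τ - score i + score j := le_trans hj1 (Nat.le_add_left _ _)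
    have h := hV (τ - score i + score j) j (n + dice i - dice j) hτ'1 hjS
    by_cases h56 : 56 ≤ τ - score i + score j
    · rw [h.1 h56]
      have hle : τ - score i + score j ≤ τ := by omega
      exact le_max_of_le_left (by exact_mod_cast hle)
    · exact le_max_of_le_right (h.2 (by omega))
  · exact h0

lemma roll_le_high {V : GState → ℝ} (hV : Good V) {τ : ℕ} (n : ℕ) (hτ : 56 ≤ τ) :
    rollVal V τ n ≤ (τ : ℝ) := by
  by_cases hn : n ∈ Finset.Icc 1 5
  case neg =>
    have h : n = 0 ∨ 6 ≤ n := by simp [Finset.mem_Icc] at hn; omega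
    rw [rollVal_zero V τ h]; positivity
  case pos =>
    have h6 : (0 : ℝ) < 6 ^ n := by positivity
    have key : ∑ k ∈ scoringConfigs,
        (freq n k : ℝ) * V (τ + score k, k, if n = dice k then 5 else n - dice k)
        ≤ (τ : ℝ) * 6 ^ n := by
      have hsum : ∑ k ∈ scoringConfigs,
          (freq n k : ℝ) * V (τ + score k, k, if n = dice k then 5 else n - dice k)
          = ∑ k ∈ scoringConfigs, ((freq n k : ℝ) * (τ : ℝ) + (freq n k : ℝ) * (score k : ℝ)) :=
        Finset.sum_congr rfl fun k hk => by
          rw [(hV (τ + score k) k (if n = dice k then 5 else n - dice k) (by omega) hk).1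
            (by omega)]
          push_cast; ring
      rw [hsum, Finset.sum_add_distrib, ← Finset.sum_mul]
      have c1 := (Nat.cast_le (α := ℝ)).2 (D2 n hn).1
      have c2 := (Nat.cast_le (α := ℝ)).2 (D2 n hn).2
      push_cast at c1 c2
      have c3 : (56 : ℝ) ≤ (τ : ℝ) := by exact_mod_cast hτ
      nlinarith [mul_nonneg (by linarith : (0:ℝ) ≤ (τ : ℝ) - 56)
        (by linarith : (0:ℝ) ≤ (6:ℝ) ^ n - ∑ k ∈ scoringConfigs, (freq n k : ℝ))]
    calc rollVal V τ n
        = (∑ k ∈ scoringConfigs,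
            (freq n k : ℝ) * V (τ + score k, k, if n = dice k then 5 else n - dice k)) / 6 ^ n := by
          unfold rollVal
          rw [Finset.sum_div]
          exact Finset.sum_congr rfl fun k _ => by ring
      _ ≤ ((τ : ℝ) * 6 ^ n) / 6 ^ n := by gcongr
      _ = (τ : ℝ) := by field_simp

lemma roll_le_low {V : GState → ℝ} (hV : Good V) {τ : ℕ} (n : ℕ) (hτ1 : 1 ≤ τ)
    (hτ : τ < 56) : rollVal V τ n ≤ 551 / 10 := by
  by_cases hn : n ∈ Finset.Icc 1 5
  case neg =>
    have h : n = 0 ∨ 6 ≤ n := by simp [Finset.mem_Icc] at hn; omega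
    rw [rollVal_zero V τ h]; norm_num
  case pos =>
    have h6 : (0 : ℝ) < 6 ^ n := by positivity
    have key : ∑ k ∈ scoringConfigs,
        (freq n k : ℝ) * V (τ + score k, k, if n = dice k then 5 else n - dice k)
        ≤ (551 / 10) * 6 ^ n := by
      have hsum : ∑ k ∈ scoringConfigs,
          (freq n k : ℝ) * V (τ + score k, k, if n = dice k then 5 else n - dice k)
          ≤ ∑ k ∈ scoringConfigs,
            (((freq n k * (if 56 ≤ τ + score k then τ + score k else 0) : ℕ) : ℝ)
              + (551 / 10) * ((freq n k * (if 56 ≤ τ + score k then 0 else 1) : ℕ) : ℝ)) := by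
        refine Finset.sum_le_sum fun k hk => ?_
        have h := hV (τ + score k) k (if n = dice k then 5 else n - dice k) (by omega) hk
        have hf : (0 : ℝ) ≤ (freq n k : ℝ) := Nat.cast_nonneg _
        by_cases h56 : 56 ≤ τ + score k
        · rw [h.1 h56]
          simp only [if_pos h56]
          push_cast
          linarith
        · have hle := h.2 (by omega)
          simp only [if_neg h56]
          push_cast
          nlinarith [mul_le_mul_of_nonneg_left hle hf]
      rw [Finset.sum_add_distrib, ← Finset.mul_sum] at hsum
      have hD := D3 n hn τ (Finset.mem_Icc.2 ⟨hτ1, by omega⟩)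
      have hcast := (Nat.cast_le (α := ℝ)).2 hD
      push_cast at hcast hsum
      linarith
    calc rollVal V τ n
        = (∑ k ∈ scoringConfigs,
            (freq n k : ℝ) * V (τ + score k, k, if n = dice k then 5 else n - dice k)) / 6 ^ n := by
          unfold rollVal
          rw [Finset.sum_div]
          exact Finset.sum_congr rfl fun k _ => by ring
      _ ≤ ((551 / 10) * 6 ^ n) / 6 ^ n := by gcongr
      _ = 551 / 10 := by field_simp

lemma good_step {V : GState → ℝ} (hV : Good V) : Good (U V) := by
  intro τ i n hτ hi
  have hmv := moveVal_le hV τ i n hi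
  constructor
  · intro h56
    have hc : (56 : ℝ) ≤ (τ : ℝ) := by exact_mod_cast h56
    have h1 : rollVal V τ n ≤ (τ : ℝ) := roll_le_high hV n h56
    have h2 : moveVal V (τ, i, n) ≤ (τ : ℝ) := hmv.trans (max_le le_rfl (by linarith))
    show max (τ : ℝ) (max (rollVal V τ n) (moveVal V (τ, i, n))) = τ
    exact max_eq_left (max_le h1 h2)
  · intro h56
    have hc : (τ : ℝ) ≤ 55 := by exact_mod_cast (by omega : τ ≤ 55)
    have h1 : rollVal V τ n ≤ 551 / 10 := roll_le_low hV n hτ h56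
    have h2 : moveVal V (τ, i, n) ≤ 551 / 10 := hmv.trans (max_le (by linarith) le_rfl)
    show max (τ : ℝ) (max (rollVal V τ n) (moveVal V (τ, i, n))) ≤ 551 / 10
    exact max_le (by linarith) (max_le h1 h2)

lemma good_base : Good (U fun _ => 0) := by
  intro τ i n hτ hi
  have hr : rollVal (fun _ => 0) τ n = 0 := by simp [rollVal]
  have hm : moveVal (fun _ => 0) (τ, i, n) ≤ 0 := by
    simp only [moveVal]
    split
    · exact Real.sSup_le (by rintro x ⟨j, hj, rfl⟩; exact le_rfl) le_rfl
    · exact le_rfl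
  have hτ0 : (0 : ℝ) ≤ (τ : ℝ) := Nat.cast_nonneg τ
  constructor
  · intro _
    show max (τ : ℝ) (max (rollVal (fun _ => 0) τ n) (moveVal (fun _ => 0) (τ, i, n))) = τ
    rw [hr]
    exact max_eq_left (max_le hτ0 (hm.trans hτ0))
  · intro h56
    have hc : (τ : ℝ) ≤ 55 := by exact_mod_cast (by omega : τ ≤ 55)
    show max (τ : ℝ) (max (rollVal (fun _ => 0) τ n) (moveVal (fun _ => 0) (τ, i, n))) ≤ 551 / 10
    rw [hr]
    exact max_le (by linarith) (max_le (by norm_num) (hm.trans (by norm_num)))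

lemma goodW : ∀ k, Good (W (k + 1)) := by
  intro k
  induction k with
  | zero =>
    have h : W 1 = U (fun _ => 0) := by simp [W]
    rw [h]; exact good_base
  | succ m ih =>
    have h : W (m + 2) = U (W (m + 1)) := Function.iterate_succ_apply' U (m + 1) _
    rw [h]; exact good_step ih
/-- for every `k ≥ 1` and every state `(τ, i, n)`,
`W_k(τ,i,n) = τ` if `τ ≥ 56`, and `W_k(τ,i,n) < 56` if `τ < 56`. -/
theorem stmt5 (k : ℕ) (hk : 1 ≤ k) (τ : ℕ) (i : Config) (n : ℕ)
    (hi : i ∈ scoringConfigs) (hn : n ∈ Finset.Icc 1 5) (hτ : 1 ≤ τ) :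
    (56 ≤ τ → W k (τ, i, n) = τ) ∧ (τ < 56 → W k (τ, i, n) < 56) := by
  obtain ⟨m, rfl⟩ : ∃ m, k = m + 1 := ⟨k - 1, by omega⟩
  have h := goodW m τ i n hτ hi
  exact ⟨h.1, fun ht => lt_of_le_of_lt (h.2 ht) (by norm_num)⟩
end

section
/- In the solitaire Ten Thousand game, the value function satisfies V*(τ,i,n) = τ for every state with τ ≥ 56, and stopping is optimal in these states. -/
noncomputable def Bnd (x : GState) : ℝ := max (max (x.1 : ℝ) (score x.2.1)) 56

lemma Bnd_nonneg (x : GState) : 0 ≤ Bnd x :=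
  le_trans (by norm_num) (le_max_right _ _)

lemma score_mono {j i : Config} (h : Smaller j i) : score j ≤ score i := by
  obtain ⟨f, o, t⟩ := j; obtain ⟨f', o', t'⟩ := i
  obtain ⟨h1, h2, h3, -, -⟩ := h
  simp only at h1 h2 h3
  simp only [score]
  rcases h3 with rfl | rfl <;> split_ifs <;> omega

lemma freq_eq_zero (n : ℕ) (hn : n = 0 ∨ 6 ≤ n) (k : Config) : freq n k = 0 := by
  unfold freq
  cases freqTable.find? (fun e => decide (e.1 = k)) with
  | none => rfl
  | some e =>
    rcases hn with rfl | hn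
    · rfl
    · match n, hn with
      | (m+6), _ => rfl

lemma sum_freq (n : ℕ) (hn : n ∈ Finset.Icc 1 5) :
    (∑ k ∈ scoringConfigs, freq n k) + fEmpty n = 6^n ∧
    (∑ k ∈ scoringConfigs, freq n k * score k) ≤ 56 * fEmpty n := by
  fin_cases hn <;> constructor <;> decide

lemma rollVal_B_le (τ n : ℕ) : rollVal Bnd τ n ≤ max (τ:ℝ) 56 := by
  set M := max (τ:ℝ) 56 with hMdef
  have hM56 : (56:ℝ) ≤ M := le_max_right _ _
  have hM0 : (0:ℝ) ≤ M := by linarith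
  by_cases hn : n ∈ Finset.Icc 1 5
  · have step : rollVal Bnd τ n ≤
        ∑ k ∈ scoringConfigs, (freq n k : ℝ) / 6 ^ n * (M + score k) := by
      apply Finset.sum_le_sum
      intro k _
      apply mul_le_mul_of_nonneg_left _ (by positivity)
      show max (max ((τ + score k : ℕ):ℝ) ((score k : ℕ):ℝ)) 56 ≤ M + score k
      have hτM : (τ:ℝ) ≤ M := le_max_left _ _
      have hs0 : (0:ℝ) ≤ (score k : ℝ) := Nat.cast_nonneg _
      push_cast
      refine max_le (max_le (by linarith) (by linarith)) (by linarith)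
    obtain ⟨hS, hT⟩ := sum_freq n hn
    have hE : (0:ℝ) ≤ (fEmpty n : ℝ) := Nat.cast_nonneg _
    have h6 : (0:ℝ) < 6 ^ n := by positivity
    have hSr : (∑ k ∈ scoringConfigs, (freq n k : ℝ)) + (fEmpty n : ℝ) = 6 ^ n := by
      exact_mod_cast congrArg (Nat.cast : ℕ → ℝ) hS
    have hTr : (∑ k ∈ scoringConfigs, (freq n k : ℝ) * (score k : ℝ)) ≤ 56 * (fEmpty n : ℝ) := by
      exact_mod_cast hT
    refine le_trans step ?_
    have hrw : ∑ k ∈ scoringConfigs, (freq n k : ℝ) / 6 ^ n * (M + score k)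
        = ((∑ k ∈ scoringConfigs, (freq n k : ℝ)) * M
           + ∑ k ∈ scoringConfigs, (freq n k : ℝ) * (score k : ℝ)) / 6 ^ n := by
      rw [Finset.sum_mul, ← Finset.sum_add_distrib, Finset.sum_div]
      apply Finset.sum_congr rfl
      intro k _
      ring
    rw [hrw, div_le_iff₀ h6]
    nlinarith [mul_nonneg (sub_nonneg.2 hM56) hE]
  · have hz : ∀ k, freq n k = 0 := by
      apply freq_eq_zero
      simp only [Finset.mem_Icc] at hn
      omega
    unfold rollVal
    simp [hz, hM0]

lemma moveVal_le_s6 (V : GState → ℝ) (hV : ∀ x, V x ≤ Bnd x) (x : GState) :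
    moveVal V x ≤ Bnd x := by
  obtain ⟨τ, i, n⟩ := x
  show (if n < 5 ∧ 1 < combs i then _ else (0:ℝ)) ≤ _
  split_ifs with h
  · apply Real.sSup_le _ (Bnd_nonneg _)
    rintro y ⟨j, hj, rfl⟩
    refine (hV _).trans ?_
    show max (max ((τ - score i + score j : ℕ):ℝ) ((score j : ℕ):ℝ)) 56
        ≤ max (max (τ:ℝ) ((score i : ℕ):ℝ)) 56
    have hs := score_mono hj
    refine max_le_max ?_ le_rfl
    rw [← Nat.cast_max, ← Nat.cast_max]
    exact_mod_cast (by omega : max (τ - score i + score j) (score j) ≤ max τ (score i))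
  · exact Bnd_nonneg _

lemma U_le (V : GState → ℝ) (hV : ∀ x, V x ≤ Bnd x) (x : GState) : U V x ≤ Bnd x := by
  obtain ⟨τ, i, n⟩ := x
  have hτ : (τ:ℝ) ≤ Bnd (τ, i, n) := le_max_of_le_left (le_max_left _ _)
  have hroll : rollVal V τ n ≤ Bnd (τ, i, n) := by
    refine le_trans ?_ (le_trans (rollVal_B_le τ n) (max_le_max (le_max_left _ _) le_rfl))
    unfold rollVal
    apply Finset.sum_le_sum
    intro k _
    exact mul_le_mul_of_nonneg_left (hV _) (by positivity)
  exact max_le hτ (max_le hroll (moveVal_le_s6 V hV _))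

lemma W_le (k : ℕ) (x : GState) : W k x ≤ Bnd x := by
  induction k generalizing x with
  | zero => simpa [W] using Bnd_nonneg x
  | succ k ih =>
    rw [W, Function.iterate_succ_apply']
    exact U_le (W k) ih x

lemma Vstar_le (x : GState) : Vstar x ≤ Bnd x :=
  ciSup_le fun k => W_le k x
/-- the value function satisfies `V*(τ,i,n) = τ` whenever
`τ ≥ 56`, and stopping (whose reward is `τ`) attains the Bellman maximum
at these states, i.e. stopping is optimal there. -/
theorem stmt6 (τ : ℕ) (i : Config) (n : ℕ)
    (hi : i ∈ scoringConfigs) (hn : n ∈ Finset.Icc 1 5) (hτ : 56 ≤ τ) :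
    Vstar (τ, i, n) = τ ∧ U Vstar (τ, i, n) = τ := by
  have hsle : score i ≤ 56 := by
    have : ∀ j ∈ scoringConfigs, score j ≤ 56 := by decide
    exact this i hi
  have hB : Bnd (τ, i, n) = τ := by
    show max (max (τ:ℝ) ((score i : ℕ):ℝ)) 56 = τ
    have h1 : ((score i : ℕ):ℝ) ≤ (τ:ℝ) := by exact_mod_cast le_trans hsle hτ
    have h2 : (56:ℝ) ≤ (τ:ℝ) := by exact_mod_cast hτ
    rw [max_eq_left h1, max_eq_left h2]
  have hbdd : BddAbove (Set.range fun k => W k (τ, i, n)) := by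
    refine ⟨Bnd (τ, i, n), ?_⟩
    rintro y ⟨k, rfl⟩
    exact W_le k _
  have hub : Vstar (τ, i, n) ≤ τ := by
    rw [← hB]; exact Vstar_le _
  have hlb : (τ:ℝ) ≤ Vstar (τ, i, n) := by
    refine le_trans ?_ (le_ciSup hbdd 1)
    show (τ:ℝ) ≤ W 1 (τ, i, n)
    rw [W, Function.iterate_one]
    exact le_max_left _ _
  refine ⟨le_antisymm hub hlb, ?_⟩
  have h1 : U Vstar (τ, i, n) ≤ τ := by
    rw [← hB]; exact U_le Vstar Vstar_le _
  have h2 : (τ:ℝ) ≤ U Vstar (τ, i, n) := le_max_left _ _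
  linarith
end

section
/- The value function of the solitaire Ten Thousand game is monotone in the accumulated score: V*(τ,i,n) ≤ V*(τ+1,i,n) for all τ ≥ 1, configurations i, and n ∈ {1,...,5}. -/
section Aux

lemma smaller_finite (i : Config) : {j : Config | Smaller j i}.Finite := by
  apply Set.Finite.subset (Set.finite_Icc ((0, 0, 0) : Config) i)
  rintro ⟨f, o, t⟩ ⟨h1, h2, h3, -, -⟩
  constructor
  · exact ⟨Nat.zero_le _, Nat.zero_le _, Nat.zero_le _⟩
  · refine ⟨h1, h2, ?_⟩
    rcases h3 with h3 | h3 <;> simp only at h3 <;> subst h3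
    · exact Nat.zero_le _
    · exact le_rfl

lemma score_le_24 : ∀ k ∈ scoringConfigs, score k ≤ 24 := by decide

lemma freq_zero_of_big (m : ℕ) (k : Config) : freq (m + 6) k = 0 := by
  unfold freq
  cases freqTable.find? (fun e => decide (e.1 = k)) <;> rfl

lemma key_ineq : ∀ n : ℕ, 312 * (∑ k ∈ scoringConfigs, freq n k) ≤ 288 * 6 ^ n := by
  intro n
  match n with
  | 0 => decide
  | 1 => decide
  | 2 => decide
  | 3 => decide
  | 4 => decide
  | 5 => decide
  | (m + 6) =>
    rw [Finset.sum_eq_zero (fun k _ => freq_zero_of_big m k)]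
    positivity

lemma U_mono (V : GState → ℝ) (hV : ∀ τ i n, V (τ, i, n) ≤ V (τ + 1, i, n)) :
    ∀ τ i n, U V (τ, i, n) ≤ U V (τ + 1, i, n) := by
  intro τ i n
  simp only [U]
  refine max_le_max (by push_cast; linarith) (max_le_max ?_ ?_)
  · -- roll
    unfold rollVal
    apply Finset.sum_le_sum
    intro k _
    apply mul_le_mul_of_nonneg_left _ (by positivity)
    have e : τ + 1 + score k = τ + score k + 1 := by omega
    rw [e]
    exact hV _ _ _
  · -- move
    simp only [moveVal]
    split_ifs with h
    · rcases Set.eq_empty_or_nonempty {j : Config | Smaller j i} with hs | hs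
      · rw [hs]; simp
      · have hb : BddAbove ((fun j =>
            V (τ + 1 - score i + score j, j, n + dice i - dice j)) ''
            {j | Smaller j i}) := ((smaller_finite i).image _).bddAbove
        apply csSup_le (hs.image _)
        rintro _ ⟨j, hj, rfl⟩
        have hle : V (τ - score i + score j, j, n + dice i - dice j) ≤
            V (τ + 1 - score i + score j, j, n + dice i - dice j) := by
          rcases (show τ + 1 - score i + score j = (τ - score i + score j) + 1 ∨
              τ + 1 - score i + score j = τ - score i + score j by omega) with h' | h'
          · rw [h']; exact hV _ _ _
          · rw [h']
        exact hle.trans (le_csSup hb ⟨j, hj, rfl⟩)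
    · exact le_rfl

lemma U_bound (V : GState → ℝ) (hV : ∀ τ i n, V (τ, i, n) ≤ (max τ (score i) : ℕ) + 288) :
    ∀ τ i n, U V (τ, i, n) ≤ (max τ (score i) : ℕ) + 288 := by
  intro τ i n
  simp only [U]
  have hτ0 : (0 : ℝ) ≤ (τ : ℝ) := Nat.cast_nonneg τ
  have hτm : (τ : ℝ) ≤ ((max τ (score i) : ℕ) : ℝ) := by exact_mod_cast le_max_left τ (score i)
  refine max_le (by linarith) (max_le ?_ ?_)
  · -- roll
    have h6 : (0 : ℝ) < 6 ^ n := by positivity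
    rw [show ((max τ (score i) : ℕ) : ℝ) + 288 = (((max τ (score i) : ℕ) : ℝ) - (τ : ℝ)) + ((τ : ℝ) + 288) by ring]
    have hstep : rollVal V τ n ≤ (τ : ℝ) + 288 := by
      calc rollVal V τ n ≤ ∑ k ∈ scoringConfigs, ((freq n k : ℝ) / 6 ^ n) * ((τ : ℝ) + 312) := by
              apply Finset.sum_le_sum
              intro k hk
              apply mul_le_mul_of_nonneg_left _ (by positivity)
              refine (hV _ _ _).trans ?_
              have hs : (score k : ℝ) ≤ 24 := by exact_mod_cast score_le_24 k hk
              have hm : max (τ + score k) (score k) = τ + score k := by omega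
              rw [hm]
              push_cast
              linarith
        _ = (((∑ k ∈ scoringConfigs, freq n k : ℕ) : ℝ)) * (((τ : ℝ) + 312) / 6 ^ n) := by
              push_cast
              rw [Finset.sum_mul]
              exact Finset.sum_congr rfl (fun k _ => by ring)
        _ ≤ (τ : ℝ) + 288 := by
              set S : ℕ := ∑ k ∈ scoringConfigs, freq n k with hS
              have h2 : 312 * (S : ℝ) ≤ 288 * 6 ^ n := by
                have := key_ineq n
                push_cast at this ⊢
                exact_mod_cast this
              clear_value S
              clear hS
              have hS0 : (0 : ℝ) ≤ (S : ℝ) := Nat.cast_nonneg S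
              have hS6 : (S : ℝ) ≤ 6 ^ n := by nlinarith
              rw [← mul_div_assoc, div_le_iff₀ h6]
              nlinarith
    linarith
  · -- move
    simp only [moveVal]
    split_ifs with h
    · apply Real.sSup_le _ (by linarith)
      rintro _ ⟨j, hj, rfl⟩
      refine (hV _ _ _).trans ?_
      have hsc : score j ≤ score i := score_mono hj
      have : ((max (τ - score i + score j) (score j) : ℕ) : ℝ) ≤ ((max τ (score i) : ℕ) : ℝ) := by
        exact_mod_cast (show max (τ - score i + score j) (score j) ≤ max τ (score i) by omega)
      linarith
    · linarith

lemma W_mono : ∀ k τ i n, W k (τ, i, n) ≤ W k (τ + 1, i, n) := by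
  intro k
  induction k with
  | zero => intro τ i n; simp [W]
  | succ k ih =>
    intro τ i n
    have e : ∀ x : GState, W (k + 1) x = U (W k) x := by
      intro x; simp only [W, Function.iterate_succ_apply']
    rw [e, e]
    exact U_mono (W k) ih τ i n

lemma W_bound : ∀ k τ i n, W k (τ, i, n) ≤ (max τ (score i) : ℕ) + 288 := by
  intro k
  induction k with
  | zero => intro τ i n; simp [W]; positivity
  | succ k ih =>
    intro τ i n
    have e : W (k + 1) (τ, i, n) = U (W k) (τ, i, n) := by
      simp only [W, Function.iterate_succ_apply']
    rw [e]
    exact U_bound (W k) ih τ i n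

end Aux

/-- the value function is monotone in the accumulated score:
`V*(τ,i,n) ≤ V*(τ+1,i,n)`. -/
theorem stmt7 (τ : ℕ) (i : Config) (n : ℕ)
    (hi : i ∈ scoringConfigs) (hn : n ∈ Finset.Icc 1 5) (hτ : 1 ≤ τ) :
    Vstar (τ, i, n) ≤ Vstar (τ + 1, i, n) := by
  unfold Vstar
  apply ciSup_mono
  · refine ⟨((max (τ + 1) (score i) : ℕ) : ℝ) + 288, ?_⟩
    rintro _ ⟨k, rfl⟩
    exact W_bound k (τ + 1) i n
  · intro k
    exact W_mono k τ i n
end
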